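/- A 1-subhomogeneous continuous map u : X → Y (i.e., ‖u(λx)‖ ≥ |λ|‖u(x)‖ for all x ∈ X, λ scalar) satisfying the summing inequality (∑ⱼ ‖u(xⱼ)‖^p)^{1/p} ≤ C sup_{φ ∈ B_{X*}} (∑ⱼ |φ(xⱼ)|^p)^{1/p} for all finite families admits a Pietsch domination: there is a Borel probability measure μ on (B_{X*}, weak-star) such that ‖u(x)‖ ≤ C (∫_{B_{X*}} |φ(x)|^p dμ(φ))^{1/p} for all x ∈ X. -/

import Mathlib

open MeasureTheory

noncomputable section

variable {X : Type*} [NormedAddCommGroup X] [NormedSpace ℝ X] [CompleteSpace X]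
variable {Y : Type*} [NormedAddCommGroup Y] [NormedSpace ℝ Y] [CompleteSpace Y]

/-- The closed unit ball of the dual of `X`, with the weak-star topology. -/
def dualBall (X : Type*) [NormedAddCommGroup X] [NormedSpace ℝ X] : Set (WeakDual ℝ X) :=
  {φ | ∀ x : X, ‖φ x‖ ≤ ‖x‖}

instance (X : Type*) [NormedAddCommGroup X] [NormedSpace ℝ X] :
    MeasurableSpace (dualBall X) := borel _

instance (X : Type*) [NormedAddCommGroup X] [NormedSpace ℝ X] :
    BorelSpace (dualBall X) := ⟨rfl⟩

/-- `T` satisfies the absolutely `p`-summing inequality with constant `C`. -/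
def SummingWith (p : ℝ) (T : X →L[ℝ] Y) (C : ℝ) : Prop :=
  ∀ (m : ℕ) (x : Fin m → X),
    (∑ i, ‖T (x i)‖ ^ p) ^ (1 / p) ≤
      C * ⨆ φ : dualBall X, (∑ i, ‖(φ : WeakDual ℝ X) (x i)‖ ^ p) ^ (1 / p)

/-- `T` is absolutely `p`-summing. -/
def AbsolutelySumming (p : ℝ) (T : X →L[ℝ] Y) : Prop :=
  ∃ C : ℝ, 0 ≤ C ∧ SummingWith p T C

/-- The absolutely `p`-summing norm `π_p(T)`. -/
def piNorm (p : ℝ) (T : X →L[ℝ] Y) : ℝ :=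
  sInf {C : ℝ | 0 ≤ C ∧ SummingWith p T C}

/-- `M` is uniformly dominated by the measure `μ` on the dual unit ball. -/
def UniformlyDominatedBy (p : ℝ) (M : Set (X →L[ℝ] Y)) (μ : Measure (dualBall X)) : Prop :=
  ∀ T ∈ M, ∀ x : X, ‖T x‖ ^ p ≤ ∫ φ : dualBall X, ‖(φ : WeakDual ℝ X) x‖ ^ p ∂μ


open MeasureTheory Topology
open scoped NNReal ENNReal

section RMK
variable {K : Type*} [TopologicalSpace K] [CompactSpace K] [T2Space K]

/-- The set of candidate values for the Riesz content of `s`. -/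
def rkSet (Λ : C(K, ℝ) →L[ℝ] ℝ) (s : Set K) : Set ℝ :=
  {r | ∃ f : C(K, ℝ), (∀ x, 0 ≤ f x) ∧ (∀ x ∈ s, 1 ≤ f x) ∧ Λ f = r}

/-- Candidate Riesz content, as a real number. -/
noncomputable def rkC (Λ : C(K, ℝ) →L[ℝ] ℝ) (s : Set K) : ℝ := sInf (rkSet Λ s)

variable (Λ : C(K, ℝ) →L[ℝ] ℝ)
variable (hpos : ∀ f : C(K, ℝ), (∀ x, 0 ≤ f x) → 0 ≤ Λ f)
set_option linter.unusedSectionVars false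
include hpos

theorem rkMono {f g : C(K, ℝ)} (h : ∀ x, f x ≤ g x) : Λ f ≤ Λ g := by
  have := hpos (g - f) (fun x => by simpa using h x)
  rw [map_sub] at this; linarith

theorem rkSet_nonempty (s : Set K) : (rkSet Λ s).Nonempty :=
  ⟨_, (1 : C(K, ℝ)), fun _ => zero_le_one, fun _ _ => le_refl _, rfl⟩

theorem rkSet_bddBelow (s : Set K) : BddBelow (rkSet Λ s) :=
  ⟨0, fun r ⟨f, hf0, _, hfr⟩ => hfr ▸ hpos f hf0⟩

theorem rkC_le {s : Set K} {f : C(K, ℝ)} (hf0 : ∀ x, 0 ≤ f x) (hf1 : ∀ x ∈ s, 1 ≤ f x) :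
    rkC Λ s ≤ Λ f :=
  csInf_le (rkSet_bddBelow Λ hpos s) ⟨f, hf0, hf1, rfl⟩

theorem rkC_nonneg (s : Set K) : 0 ≤ rkC Λ s :=
  le_csInf (rkSet_nonempty Λ hpos s) (fun r ⟨f, hf0, _, hfr⟩ => hfr ▸ hpos f hf0)

theorem rkC_mono {s t : Set K} (h : s ⊆ t) : rkC Λ s ≤ rkC Λ t :=
  le_csInf (rkSet_nonempty Λ hpos t)
    (fun r ⟨f, hf0, hf1, hfr⟩ => hfr ▸ rkC_le Λ hpos hf0 (fun x hx => hf1 x (h hx)))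

theorem rkC_union_le (s t : Set K) : rkC Λ (s ∪ t) ≤ rkC Λ s + rkC Λ t := by
  refine le_of_forall_pos_le_add (fun ε hε => ?_)
  obtain ⟨r₁, ⟨f₁, hf₁0, hf₁1, rfl⟩, hr₁⟩ :=
    (Real.lt_sInf_add_pos (rkSet_nonempty Λ hpos s) (half_pos hε))
  obtain ⟨r₂, ⟨f₂, hf₂0, hf₂1, rfl⟩, hr₂⟩ :=
    (Real.lt_sInf_add_pos (rkSet_nonempty Λ hpos t) (half_pos hε))
  have : rkC Λ (s ∪ t) ≤ Λ (f₁ + f₂) := by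
    refine rkC_le Λ hpos (fun x => add_nonneg (hf₁0 x) (hf₂0 x)) ?_
    rintro x (hx | hx)
    · exact le_add_of_le_of_nonneg (hf₁1 x hx) (hf₂0 x)
    · exact le_add_of_nonneg_of_le (hf₁0 x) (hf₂1 x hx)
  rw [map_add] at this
  unfold rkC at *
  linarith


theorem rkC_disjoint {s t : Set K} (hs : IsCompact s) (ht : IsCompact t)
    (hd : Disjoint s t) : rkC Λ s + rkC Λ t ≤ rkC Λ (s ∪ t) := by
  obtain ⟨g, hg0, hg1, hg01⟩ := exists_continuous_zero_one_of_isClosed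
    hs.isClosed ht.isClosed hd
  refine le_csInf (rkSet_nonempty Λ hpos _) ?_
  rintro r ⟨f, hf0, hf1, rfl⟩
  have h1 : rkC Λ s ≤ Λ (f * (1 - g)) := by
    refine rkC_le Λ hpos (fun x => mul_nonneg (hf0 x) (by simpa using (hg01 x).2)) ?_
    intro x hx
    have : g x = 0 := hg0 hx
    simpa [this] using hf1 x (Or.inl hx)
  have h2 : rkC Λ t ≤ Λ (f * g) := by
    refine rkC_le Λ hpos (fun x => mul_nonneg (hf0 x) (hg01 x).1) ?_
    intro x hx
    have : g x = 1 := hg1 hx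
    simpa [this] using hf1 x (Or.inr hx)
  have : Λ (f * (1 - g)) + Λ (f * g) = Λ f := by
    rw [← map_add]; congr 1; ring
  linarith

/-- The content associated to a positive functional on `C(K, ℝ)`. -/
noncomputable def rkContent : Content K where
  toFun s := (rkC Λ s).toNNReal
  mono' s t h := Real.toNNReal_mono (rkC_mono Λ hpos h)
  sup_disjoint' s t hd _ _ := by
    have hle : rkC Λ (↑s ∪ ↑t) ≤ rkC Λ ↑s + rkC Λ ↑t := rkC_union_le Λ hpos _ _
    have hge := rkC_disjoint Λ hpos s.isCompact t.isCompact hd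
    have : rkC Λ ↑(s ⊔ t) = rkC Λ ↑s + rkC Λ ↑t := by
      rw [TopologicalSpace.Compacts.coe_sup]; linarith
    rw [this, Real.toNNReal_add (rkC_nonneg Λ hpos _) (rkC_nonneg Λ hpos _)]
  sup_le' s t := by
    rw [TopologicalSpace.Compacts.coe_sup]
    refine (Real.toNNReal_mono (rkC_union_le Λ hpos ↑s ↑t)).trans ?_
    exact Real.toNNReal_add_le

variable [MeasurableSpace K] [BorelSpace K]

/-- The measure associated to a positive functional. -/
noncomputable def rkMeasure : Measure K := (rkContent Λ hpos).measure

theorem rkMeasure_univ (hΛ1 : Λ 1 = 1) : rkMeasure Λ hpos Set.univ = 1 := by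
  have h1 : rkC Λ (Set.univ : Set K) = 1 := by
    refine le_antisymm ?_ ?_
    · simpa [hΛ1] using rkC_le Λ hpos (f := 1) (fun _ => zero_le_one) (fun _ _ => le_refl _)
    · refine le_csInf (rkSet_nonempty Λ hpos _) ?_
      rintro r ⟨f, hf0, hf1, rfl⟩
      calc (1:ℝ) = Λ 1 := hΛ1.symm
      _ ≤ Λ f := rkMono Λ hpos (fun x => by simpa using hf1 x trivial)
  rw [rkMeasure, (rkContent Λ hpos).measure_apply MeasurableSet.univ,
    (rkContent Λ hpos).outerMeasure_of_isOpen Set.univ isOpen_univ,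
    Content.innerContent_of_isCompact _ isCompact_univ]
  show ((rkC Λ (Set.univ : Set K)).toNNReal : ℝ≥0∞) = 1
  rw [h1]; simp

theorem rkMeasure_open_le {U : Set K} (hU : IsOpen U) (h : C(K, ℝ))
    (hh0 : ∀ x, 0 ≤ h x) {c : ℝ} (hc : 0 < c) (hhU : ∀ x ∈ U, c ≤ h x) :
    rkMeasure Λ hpos U ≤ ENNReal.ofReal (Λ (c⁻¹ • h)) := by
  rw [rkMeasure, (rkContent Λ hpos).measure_apply hU.measurableSet,
    (rkContent Λ hpos).outerMeasure_of_isOpen U hU, Content.innerContent]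
  refine iSup₂_le (fun K' hK' => ?_)
  show ((rkC Λ (K' : Set K)).toNNReal : ℝ≥0∞) ≤ _
  rw [ENNReal.ofReal]
  refine ENNReal.coe_le_coe.2 (Real.toNNReal_mono ?_)
  refine rkC_le Λ hpos (fun x => ?_) (fun x hx => ?_)
  · exact mul_nonneg (inv_nonneg.2 hc.le) (hh0 x)
  · show (1:ℝ) ≤ c⁻¹ * h x
    calc (1:ℝ) = c⁻¹ * c := by field_simp
    _ ≤ c⁻¹ * h x := by
        have := hhU x (hK' hx)
        exact mul_le_mul_of_nonneg_left this (inv_nonneg.2 hc.le)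

theorem rk_exists_measure (hΛ1 : Λ 1 = 1) :
    ∃ μ : Measure K, IsProbabilityMeasure μ ∧ ∀ f : C(K, ℝ), Λ f ≤ ∫ x, f x ∂μ := by
  set μ := rkMeasure Λ hpos with hμ
  haveI hP : IsProbabilityMeasure μ := ⟨rkMeasure_univ Λ hpos hΛ1⟩
  have hint : ∀ g : C(K, ℝ), Integrable (fun x => g x) μ := fun g =>
    g.continuous.integrable_of_hasCompactSupport (HasCompactSupport.of_compactSpace _)
  -- The easy direction of Riesz representation: `∫ f ≤ Λ f` for `f ≥ 0`.
  have easy : ∀ f : C(K, ℝ), (∀ x, 0 ≤ f x) → ∫ x, f x ∂μ ≤ Λ f := by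
    intro f hf0
    refine le_of_forall_pos_le_add (fun ε hε => ?_)
    set g : ℕ → C(K, ℝ) := fun i => f ⊓ ContinuousMap.const K ((i : ℝ) * ε) with hgdef
    have hgx : ∀ (i : ℕ) (x : K), g i x = min (f x) ((i : ℝ) * ε) := fun i x => by
      simp [hgdef]
    set h : ℕ → C(K, ℝ) := fun i => g (i + 1) - g i with hhdef
    have hhx : ∀ (i : ℕ) (x : K),
        h i x = min (f x) (((i : ℝ) + 1) * ε) - min (f x) ((i : ℝ) * ε) := fun i x => by
      simp [hhdef, hgx]
    set N := ⌈‖f‖ / ε⌉₊ with hN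
    have hfx_le : ∀ x, f x ≤ (N : ℝ) * ε := by
      intro x
      have h1 : f x ≤ ‖f‖ := (le_abs_self _).trans (f.norm_coe_le_norm x)
      have h2 : ‖f‖ / ε ≤ (N : ℝ) := Nat.le_ceil _
      calc f x ≤ ‖f‖ := h1
      _ = ‖f‖ / ε * ε := by field_simp
      _ ≤ (N : ℝ) * ε := by nlinarith
    have hgN : g N = f := by
      ext x; rw [hgx]; exact min_eq_left (hfx_le x)
    have hg0 : g 0 = 0 := by
      ext x; rw [hgx]; simpa using min_eq_right (hf0 x)
    have hsum : ∀ M : ℕ, ∑ i ∈ Finset.range M, h i = g M := by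
      intro M
      rw [hhdef, Finset.sum_range_sub g, hg0, sub_zero]
    have hh0 : ∀ i x, 0 ≤ h i x := by
      intro i x; rw [hhx]
      have : (i : ℝ) * ε ≤ ((i : ℝ) + 1) * ε := by nlinarith
      have := min_le_min (le_refl (f x)) this
      linarith
    -- the open superlevel sets
    set U : ℕ → Set K := fun i => {x | (i : ℝ) * ε < f x} with hUdef
    have hUopen : ∀ i, IsOpen (U i) := fun i =>
      isOpen_lt continuous_const f.continuous
    -- step 5 : ∫ h i ≤ ε * μ (U i)
    have step5 : ∀ i, ∫ x, h i x ∂μ ≤ ε * (μ (U i)).toReal := by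
      intro i
      have hptwise : ∀ x, h i x ≤ Set.indicator (U i) (fun _ => ε) x := by
        intro x
        rcases le_or_gt (f x) ((i : ℝ) * ε) with hx | hx
        · have : h i x = 0 := by
            rw [hhx]
            have h1 : min (f x) (((i : ℝ) + 1) * ε) = f x :=
              min_eq_left (by nlinarith)
            have h2 : min (f x) ((i : ℝ) * ε) = f x := min_eq_left hx
            rw [h1, h2]; ring
          rw [this]
          exact Set.indicator_nonneg (fun _ _ => hε.le) x
        · have hxU : x ∈ U i := hx
          rw [Set.indicator_of_mem hxU, hhx]
          simp only [min_def]; split_ifs <;> linarith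
      calc ∫ x, h i x ∂μ ≤ ∫ x, Set.indicator (U i) (fun _ => ε) x ∂μ :=
            integral_mono (hint _) ((integrable_const ε).indicator (hUopen i).measurableSet)
              hptwise
      _ = (μ (U i)).toReal • ε := integral_indicator_const ε (hUopen i).measurableSet
      _ = ε * (μ (U i)).toReal := by rw [smul_eq_mul]; ring
    -- step 6 : for `j`, ε * μ (U (j+1)) ≤ Λ (h j)
    have step6 : ∀ j : ℕ, ε * (μ (U (j + 1))).toReal ≤ Λ (h j) := by
      intro j
      have hon : ∀ x ∈ U (j + 1), ε ≤ h j x := by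
        intro x hx
        have hx' : ((j : ℝ) + 1) * ε < f x := by
          have : x ∈ {x | ((j + 1 : ℕ) : ℝ) * ε < f x} := hx
          push_cast at this; exact this
        rw [hhx]
        have h1 : min (f x) (((j : ℝ) + 1) * ε) = ((j : ℝ) + 1) * ε :=
          min_eq_right hx'.le
        have h2 : min (f x) ((j : ℝ) * ε) = (j : ℝ) * ε :=
          min_eq_right (by nlinarith)
        rw [h1, h2]; ring_nf; linarith [le_refl ε]
      have hkey := rkMeasure_open_le Λ hpos (hUopen (j + 1)) (h j) (hh0 j) hε hon
      have hΛnn : 0 ≤ Λ (h j) := hpos _ (hh0 j)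
      have hsmul : Λ (ε⁻¹ • h j) = ε⁻¹ * Λ (h j) := by rw [Λ.map_smul]; rfl
      have h1 : (μ (U (j + 1))).toReal ≤ ε⁻¹ * Λ (h j) := by
        refine ENNReal.toReal_le_of_le_ofReal (by positivity) ?_
        rw [← hsmul]; exact hkey
      calc ε * (μ (U (j + 1))).toReal ≤ ε * (ε⁻¹ * Λ (h j)) :=
            mul_le_mul_of_nonneg_left h1 hε.le
      _ = Λ (h j) := by field_simp
    -- step 7 : ε * μ (U 0) ≤ ε
    have step7 : ε * (μ (U 0)).toReal ≤ ε := by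
      have h1 : μ (U 0) ≤ 1 := prob_le_one
      have h2 : (μ (U 0)).toReal ≤ 1 := by
        simpa using ENNReal.toReal_mono ENNReal.one_ne_top h1
      nlinarith
    -- assembling
    have hint_eq : ∫ x, f x ∂μ = ∑ i ∈ Finset.range N, ∫ x, h i x ∂μ := by
      rw [← integral_finset_sum _ (fun i _ => hint (h i))]
      congr 1; funext x
      conv_lhs => rw [← hgN, ← hsum N]
      simp [ContinuousMap.coe_sum]
    rcases Nat.eq_zero_or_pos N with hN0 | hN0
    · rw [hint_eq, hN0]
      simp only [Finset.range_zero, Finset.sum_empty]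
      have := hpos f hf0
      linarith
    · obtain ⟨M, hM⟩ := Nat.exists_eq_succ_of_ne_zero hN0.ne'
      rw [hM] at hint_eq
      rw [hint_eq, Finset.sum_range_succ']
      have hbound : ∑ i ∈ Finset.range M, ∫ x, h (i + 1) x ∂μ ≤ Λ f := by
        have h1 : ∑ i ∈ Finset.range M, ∫ x, h (i + 1) x ∂μ ≤
            ∑ i ∈ Finset.range M, Λ (h i) := by
          refine Finset.sum_le_sum (fun i _ => ?_)
          exact (step5 (i + 1)).trans (step6 i)
        have h2 : ∑ i ∈ Finset.range M, Λ (h i) = Λ (g M) := by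
          rw [← map_sum, hsum M]
        have h3 : Λ (g M) ≤ Λ f := by
          refine rkMono Λ hpos (fun x => ?_)
          rw [hgx]; exact min_le_left _ _
        linarith
      have h0 : ∫ x, h 0 x ∂μ ≤ ε := (step5 0).trans step7
      linarith
  -- flipping the inequality
  refine ⟨μ, hP, fun f => ?_⟩
  have hflip := easy (ContinuousMap.const K ‖f‖ - f)
    (fun x => by
      have : f x ≤ ‖f‖ := (le_abs_self _).trans (f.norm_coe_le_norm x)
      simpa using this)
  have hconst : Λ (ContinuousMap.const K ‖f‖) = ‖f‖ := by
    have : (ContinuousMap.const K ‖f‖) = ‖f‖ • (1 : C(K, ℝ)) := by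
      ext x; simp
    rw [this, Λ.map_smul, hΛ1]; simp
  have hint1 : ∫ x, (ContinuousMap.const K ‖f‖ - f) x ∂μ = ‖f‖ - ∫ x, f x ∂μ := by
    have : ∀ x : K, (ContinuousMap.const K ‖f‖ - f) x = ‖f‖ - f x := fun x => by simp
    rw [funext this, integral_sub (integrable_const _) (hint f), integral_const]
    simp
  rw [map_sub, hconst, hint1] at hflip
  linarith

end RMK

theorem dualBall_eq (X : Type*) [NormedAddCommGroup X] [NormedSpace ℝ X] :
    dualBall X = WeakDual.toStrongDual ⁻¹' Metric.closedBall 0 1 := by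
  ext φ
  simp only [dualBall, Set.mem_setOf_eq, Set.mem_preimage, Metric.mem_closedBall,
    dist_zero_right]
  constructor
  · intro h
    exact ContinuousLinearMap.opNorm_le_bound _ zero_le_one (fun x => by
      simpa [one_mul] using h x)
  · intro h x
    calc ‖φ x‖ ≤ ‖WeakDual.toStrongDual φ‖ * ‖x‖ := ContinuousLinearMap.le_opNorm _ x
    _ ≤ ‖x‖ := by nlinarith [norm_nonneg x]

theorem isCompact_dualBall (X : Type*) [NormedAddCommGroup X] [NormedSpace ℝ X] :
    IsCompact (dualBall X) := by
  rw [dualBall_eq]; exact WeakDual.isCompact_closedBall (𝕜 := ℝ) (0 : StrongDual ℝ X) 1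

theorem zero_mem_dualBall (X : Type*) [NormedAddCommGroup X] [NormedSpace ℝ X] :
    (0 : WeakDual ℝ X) ∈ dualBall X := fun x => by
  rw [show (0 : WeakDual ℝ X) x = (0 : ℝ) from rfl]; simp

theorem pietsch_star (p : ℝ) (hp : 1 ≤ p) (u : X → Y) (C : ℝ) (hC : 0 ≤ C)
    (hsum : ∀ (m : ℕ) (x : Fin m → X),
      (∑ j, ‖u (x j)‖ ^ p) ^ (1 / p) ≤
        C * ⨆ φ : dualBall X, (∑ j, ‖(φ : WeakDual ℝ X) (x j)‖ ^ p) ^ (1 / p)) :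
    ∀ (m : ℕ) (xs : Fin m → X), ∃ φ₀ : dualBall X,
      ∑ j, ‖u (xs j)‖ ^ p ≤ ∑ j, C ^ p * ‖(φ₀ : WeakDual ℝ X) (xs j)‖ ^ p := by
  haveI : CompactSpace (dualBall X) := isCompact_iff_compactSpace.mp (isCompact_dualBall X)
  haveI : Nonempty (dualBall X) := ⟨⟨0, zero_mem_dualBall X⟩⟩
  have hp0 : 0 < p := lt_of_lt_of_le one_pos hp
  intro m xs
  have hAcont : Continuous (fun φ : dualBall X => ∑ j, ‖(φ : WeakDual ℝ X) (xs j)‖ ^ p) := by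
    refine continuous_finset_sum _ (fun j _ => ?_)
    have h1 : Continuous (fun φ : dualBall X => ‖(φ : WeakDual ℝ X) (xs j)‖) :=
      ((WeakDual.eval_continuous (xs j)).comp continuous_subtype_val).norm
    have h2 : Continuous (fun t : ℝ => t ^ p) := by
      rw [continuous_iff_continuousAt]
      exact fun x => Real.continuousAt_rpow_const _ _ (Or.inr hp0.le)
    exact h2.comp h1
  obtain ⟨φ₀, -, hφ₀⟩ := isCompact_univ.exists_isMaxOn (Set.univ_nonempty)
    hAcont.continuousOn
  set A : dualBall X → ℝ := fun φ => ∑ j, ‖(φ : WeakDual ℝ X) (xs j)‖ ^ p with hA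
  have hAnn : ∀ φ, 0 ≤ A φ := fun φ =>
    Finset.sum_nonneg (fun j _ => Real.rpow_nonneg (norm_nonneg _) p)
  have hsup : (⨆ φ : dualBall X, (A φ) ^ (1 / p)) = (A φ₀) ^ (1 / p) := by
    refine le_antisymm (ciSup_le (fun φ => ?_))
      (le_ciSup (f := fun φ : dualBall X => (A φ) ^ (1 / p)) ⟨(A φ₀) ^ (1 / p), ?_⟩ φ₀)
    · exact Real.rpow_le_rpow (hAnn φ) (hφ₀ (Set.mem_univ φ)) (by positivity)
    · rintro r ⟨φ, rfl⟩
      exact Real.rpow_le_rpow (hAnn φ) (hφ₀ (Set.mem_univ φ)) (by positivity)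
  have h1 := hsum m xs
  rw [show (⨆ φ : dualBall X, (∑ j, ‖(φ : WeakDual ℝ X) (xs j)‖ ^ p) ^ (1 / p))
      = ⨆ φ : dualBall X, (A φ) ^ (1 / p) from rfl, hsup] at h1
  have hS1 : (0:ℝ) ≤ ∑ j, ‖u (xs j)‖ ^ p :=
    Finset.sum_nonneg (fun j _ => Real.rpow_nonneg (norm_nonneg _) p)
  have h2 := Real.rpow_le_rpow (by positivity) h1 hp0.le
  rw [← Real.rpow_mul hS1, one_div_mul_cancel hp0.ne', Real.rpow_one,
    Real.mul_rpow hC (by positivity), ← Real.rpow_mul (hAnn φ₀),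
    one_div_mul_cancel hp0.ne', Real.rpow_one] at h2
  exact ⟨φ₀, by rwa [← Finset.mul_sum]⟩

set_option maxHeartbeats 2000000 in
theorem stmt13 (p : ℝ) (hp : 1 ≤ p) (u : X → Y) (hu : Continuous u)
    (hsub : ∀ (x : X) (l : ℝ), |l| * ‖u x‖ ≤ ‖u (l • x)‖)
    (C : ℝ) (hC : 0 ≤ C)
    (hsum : ∀ (m : ℕ) (x : Fin m → X),
      (∑ j, ‖u (x j)‖ ^ p) ^ (1 / p) ≤
        C * ⨆ φ : dualBall X, (∑ j, ‖(φ : WeakDual ℝ X) (x j)‖ ^ p) ^ (1 / p)) :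
    ∃ μ : Measure (dualBall X), IsProbabilityMeasure μ ∧
      ∀ x : X, ‖u x‖ ≤ C * (∫ φ : dualBall X, ‖(φ : WeakDual ℝ X) x‖ ^ p ∂μ) ^ (1 / p) := by
  classical
  haveI hcs : CompactSpace (dualBall X) := isCompact_iff_compactSpace.mp (isCompact_dualBall X)
  haveI hne : Nonempty (dualBall X) := ⟨⟨0, zero_mem_dualBall X⟩⟩
  have hp0 : 0 < p := lt_of_lt_of_le one_pos hp
  have star := pietsch_star p hp u C hC hsum
  -- the basic continuous maps on the dual ball
  have hecont : ∀ x : X, Continuous (fun φ : dualBall X => ‖(φ : WeakDual ℝ X) x‖ ^ p) := by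
    intro x
    have h1 : Continuous (fun φ : dualBall X => ‖(φ : WeakDual ℝ X) x‖) :=
      ((WeakDual.eval_continuous x).comp continuous_subtype_val).norm
    have h2 : Continuous (fun t : ℝ => t ^ p) := by
      rw [continuous_iff_continuousAt]
      exact fun t => Real.continuousAt_rpow_const _ _ (Or.inr hp0.le)
    exact h2.comp h1
  set ee : X → C(dualBall X, ℝ) := fun x => ⟨_, hecont x⟩ with hee
  set qq : X → C(dualBall X, ℝ) := fun x =>
    ContinuousMap.const _ (‖u x‖ ^ p) - C ^ p • ee x with hqqdef
  have hqq : ∀ (x : X) (φ : dualBall X),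
      qq x φ = ‖u x‖ ^ p - C ^ p * ‖(φ : WeakDual ℝ X) x‖ ^ p := fun x φ => by
    simp [hqqdef, hee]
  -- the convex sets to be separated
  set P : Set C(dualBall X, ℝ) := {g | ∀ φ, 0 < g φ} with hPdef
  set Q : Set C(dualBall X, ℝ) :=
    {h | ∃ g, (∃ m : ℕ, ∃ xs : Fin m → X, g = ∑ j, qq (xs j)) ∧ ∀ φ, h φ ≤ g φ} with hQdef
  have hPopen : IsOpen P := by
    rw [Metric.isOpen_iff]
    intro g hg
    obtain ⟨φm, -, hφm⟩ := isCompact_univ.exists_isMinOn (Set.univ_nonempty)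
      g.continuous.continuousOn
    refine ⟨g φm, hg φm, fun g' hg' φ => ?_⟩
    have h1 : |g' φ - g φ| ≤ dist g' g := by
      rw [← Real.dist_eq]; exact ContinuousMap.dist_apply_le_dist φ
    have h2 : g φm ≤ g φ := hφm (Set.mem_univ φ)
    rw [Metric.mem_ball] at hg'
    have := abs_lt.1 (lt_of_le_of_lt h1 hg')
    linarith [this.1]
  have hPconv : Convex ℝ P := by
    rintro g1 h1 g2 h2 a b ha hb hab φ
    have e1 := h1 φ; have e2 := h2 φ
    show 0 < (a • g1 + b • g2) φ
    simp only [ContinuousMap.add_apply, ContinuousMap.smul_apply, smul_eq_mul]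
    rcases ha.lt_or_eq with ha' | ha'
    · nlinarith
    · have hb1 : b = 1 := by linarith
      rw [← ha', hb1]; simpa using e2
  -- scaling inequality for members of `Q`
  have hscale : ∀ a : ℝ, 0 ≤ a → ∀ (x : X) (φ : dualBall X),
      a * qq x φ ≤ qq (a ^ (1 / p) • x) φ := by
    intro a ha x φ
    have hcp : (a ^ (1 / p) : ℝ) ^ p = a := by
      rw [← Real.rpow_mul ha, one_div_mul_cancel hp0.ne', Real.rpow_one]
    have hcnn : (0:ℝ) ≤ a ^ (1 / p) := Real.rpow_nonneg ha _
    have hφ : ‖(φ : WeakDual ℝ X) (a ^ (1 / p) • x)‖ ^ p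
        = a * ‖(φ : WeakDual ℝ X) x‖ ^ p := by
      rw [_root_.map_smul, norm_smul, Real.mul_rpow (norm_nonneg _) (norm_nonneg _),
        Real.norm_eq_abs, abs_of_nonneg hcnn, hcp]
    have hux : a * ‖u x‖ ^ p ≤ ‖u (a ^ (1 / p) • x)‖ ^ p := by
      have h1 := hsub x (a ^ (1 / p))
      have h2 : (0:ℝ) ≤ |a ^ (1 / p)| * ‖u x‖ := by positivity
      have h3 := Real.rpow_le_rpow h2 h1 hp0.le
      rw [Real.mul_rpow (abs_nonneg _) (norm_nonneg _), abs_of_nonneg hcnn, hcp] at h3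
      exact h3
    rw [hqq, hqq, hφ]
    nlinarith [Real.rpow_nonneg (norm_nonneg ((φ : WeakDual ℝ X) x)) p,
      Real.rpow_nonneg hC p]
  have hQconv : Convex ℝ Q := by
    rintro h1 ⟨g1, ⟨m1, xs1, rfl⟩, hle1⟩ h2 ⟨g2, ⟨m2, xs2, rfl⟩, hle2⟩ a b ha hb hab
    refine ⟨∑ j : Fin (m1 + m2),
      qq (Fin.append (fun i => a ^ (1/p) • xs1 i) (fun i => b ^ (1/p) • xs2 i) j),
      ⟨m1 + m2, _, rfl⟩, fun φ => ?_⟩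
    have hsplit : (∑ j : Fin (m1 + m2),
        qq (Fin.append (fun i => a ^ (1/p) • xs1 i) (fun i => b ^ (1/p) • xs2 i) j)) φ
        = ∑ j : Fin m1, qq (a ^ (1/p) • xs1 j) φ + ∑ j : Fin m2, qq (b ^ (1/p) • xs2 j) φ := by
      simp only [ContinuousMap.coe_sum, Finset.sum_apply]
      rw [Fin.sum_univ_add]
      congr 1
      · exact Finset.sum_congr rfl fun i _ => by rw [Fin.append_left]
      · exact Finset.sum_congr rfl fun i _ => by rw [Fin.append_right]
    rw [hsplit]
    have e1 : (∑ j : Fin m1, qq (xs1 j)) φ = ∑ j : Fin m1, qq (xs1 j) φ := by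
      simp only [ContinuousMap.coe_sum, Finset.sum_apply]
    have e2 : (∑ j : Fin m2, qq (xs2 j)) φ = ∑ j : Fin m2, qq (xs2 j) φ := by
      simp only [ContinuousMap.coe_sum, Finset.sum_apply]
    have step1 : (a • h1 + b • h2) φ ≤
        a * ∑ j : Fin m1, qq (xs1 j) φ + b * ∑ j : Fin m2, qq (xs2 j) φ := by
      have l1 := hle1 φ; have l2 := hle2 φ
      rw [e1] at l1; rw [e2] at l2
      simp only [ContinuousMap.add_apply, ContinuousMap.smul_apply, smul_eq_mul]
      nlinarith
    refine step1.trans ?_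
    rw [Finset.mul_sum, Finset.mul_sum]
    refine add_le_add (Finset.sum_le_sum fun j _ => hscale a ha (xs1 j) φ)
      (Finset.sum_le_sum fun j _ => hscale b hb (xs2 j) φ)
  have hdisj : Disjoint P Q := by
    rw [Set.disjoint_left]
    rintro h hP ⟨g, ⟨m, xs, rfl⟩, hle⟩
    obtain ⟨φ₀, hφ₀⟩ := star m xs
    have h1 : (∑ j : Fin m, qq (xs j)) φ₀ ≤ 0 := by
      have e1 : (∑ j : Fin m, qq (xs j)) φ₀ = ∑ j : Fin m, qq (xs j) φ₀ := by
        simp only [ContinuousMap.coe_sum, Finset.sum_apply]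
      rw [e1]
      have : ∑ j : Fin m, qq (xs j) φ₀
          = ∑ j, ‖u (xs j)‖ ^ p - ∑ j, C ^ p * ‖(φ₀ : WeakDual ℝ X) (xs j)‖ ^ p := by
        rw [← Finset.sum_sub_distrib]
        exact Finset.sum_congr rfl (fun j _ => hqq (xs j) φ₀)
      rw [this]; linarith
    linarith [hP φ₀, hle φ₀]
  -- Hahn-Banach separation
  obtain ⟨L, c, hL1, hL2⟩ := geometric_hahn_banach_open hPconv hPopen hQconv hdisj
  have hzeroQ : (0 : C(dualBall X, ℝ)) ∈ Q :=
    ⟨0, ⟨0, (fun j => j.elim0), by simp⟩, fun φ => le_refl _⟩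
  have hc0 : c ≤ 0 := by simpa using hL2 0 hzeroQ
  have honeP : ∀ ε : ℝ, 0 < ε → (ContinuousMap.const (dualBall X) ε) ∈ P :=
    fun ε hε φ => hε
  have hconstL : ∀ ε : ℝ, L (ContinuousMap.const (dualBall X) ε) = ε * L 1 := by
    intro ε
    rw [show ContinuousMap.const (dualBall X) ε = ε • (1 : C(dualBall X, ℝ)) from by ext; simp,
      L.map_smul]; rfl
  have hL1neg : L 1 < 0 := by
    have := hL1 _ (honeP 1 one_pos)
    rw [hconstL, one_mul] at this
    linarith
  have hcge : 0 ≤ c := by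
    by_contra hlt
    push_neg at hlt
    have hε : 0 < c / L 1 := div_pos_of_neg_of_neg hlt hL1neg
    have := hL1 _ (honeP _ hε)
    rw [hconstL, div_mul_cancel₀ _ hL1neg.ne] at this
    exact lt_irrefl c this
  have hceq : c = 0 := le_antisymm hc0 hcge
  -- positivity of -L
  have hLpos : ∀ f : C(dualBall X, ℝ), (∀ φ, 0 ≤ f φ) → L f ≤ 0 := by
    intro f hf
    by_contra hpos'
    push_neg at hpos'
    set ε := L f / (2 * (-(L 1))) with hεdef
    have hε : 0 < ε := by
      apply div_pos hpos'; linarith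
    have hmem : f + ContinuousMap.const (dualBall X) ε ∈ P := by
      intro φ
      have := hf φ
      simp only [ContinuousMap.add_apply, ContinuousMap.const_apply, Set.mem_setOf_eq]
      linarith
    have := hL1 _ hmem
    rw [map_add, hconstL, hceq] at this
    have hcalc : ε * L 1 = -(L f) / 2 := by
      have h0 : L 1 ≠ 0 := hL1neg.ne
      rw [hεdef]; field_simp
    rw [hcalc] at this
    linarith
  -- the normalized positive functional
  set Λ : C(dualBall X, ℝ) →L[ℝ] ℝ := (-(L 1))⁻¹ • (-L) with hΛdef
  have hΛapp : ∀ f, Λ f = (-(L 1))⁻¹ * (-(L f)) := fun f => rfl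
  have hL1pos : 0 < -(L 1) := by linarith
  have hΛpos : ∀ f : C(dualBall X, ℝ), (∀ φ, 0 ≤ f φ) → 0 ≤ Λ f := by
    intro f hf
    rw [hΛapp]
    have := hLpos f hf
    have h1 : (0:ℝ) ≤ (-(L 1))⁻¹ := inv_nonneg.2 hL1pos.le
    nlinarith
  have hΛ1 : Λ (1 : C(dualBall X, ℝ)) = 1 := by
    rw [hΛapp, inv_mul_cancel₀ (by linarith)]
  obtain ⟨μ, hμP, hrep⟩ := rk_exists_measure Λ hΛpos hΛ1
  refine ⟨μ, hμP, fun x => ?_⟩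
  -- `qq x` belongs to `Q`
  have hqmem : qq x ∈ Q := ⟨qq x, ⟨1, fun _ => x, by simp⟩, fun φ => le_refl _⟩
  have hLq : 0 ≤ L (qq x) := by
    have := hL2 _ hqmem; rw [hceq] at this; exact this
  have hΛq : Λ (qq x) ≤ 0 := by
    rw [hΛapp]
    have h1 : (0:ℝ) ≤ (-(L 1))⁻¹ := inv_nonneg.2 hL1pos.le
    nlinarith
  -- expand `Λ (qq x)`
  have hΛconst : ∀ a : ℝ, Λ (ContinuousMap.const (dualBall X) a) = a := by
    intro a
    rw [show ContinuousMap.const (dualBall X) a = a • (1 : C(dualBall X, ℝ)) from by ext; simp,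
      Λ.map_smul, hΛ1]; simp
  have hexpand : Λ (qq x) = ‖u x‖ ^ p - C ^ p * Λ (ee x) := by
    rw [hqqdef]
    simp only [map_sub, Λ.map_smul]
    rw [hΛconst]; rfl
  have hkey : ‖u x‖ ^ p ≤ C ^ p * Λ (ee x) := by
    rw [hexpand] at hΛq; linarith
  -- the integral bound
  have hrepe := hrep (ee x)
  have hIeq : ∫ φ, (ee x) φ ∂μ = ∫ φ : dualBall X, ‖(φ : WeakDual ℝ X) x‖ ^ p ∂μ := rfl
  rw [hIeq] at hrepe
  set I : ℝ := ∫ φ : dualBall X, ‖(φ : WeakDual ℝ X) x‖ ^ p ∂μ with hIdef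
  have hI0 : 0 ≤ I := integral_nonneg (fun φ => Real.rpow_nonneg (norm_nonneg _) p)
  have hfinal : ‖u x‖ ^ p ≤ C ^ p * I := by
    have h2 : C ^ p * Λ (ee x) ≤ C ^ p * I :=
      mul_le_mul_of_nonneg_left hrepe (Real.rpow_nonneg hC p)
    linarith
  have h3 := Real.rpow_le_rpow (Real.rpow_nonneg (norm_nonneg _) p) hfinal
    (by positivity : (0:ℝ) ≤ 1 / p)
  rw [← Real.rpow_mul (norm_nonneg _), mul_one_div_cancel hp0.ne', Real.rpow_one,
    Real.mul_rpow (Real.rpow_nonneg hC p) hI0, ← Real.rpow_mul hC,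
    mul_one_div_cancel hp0.ne', Real.rpow_one] at h3
  exact h3
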